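/- arXiv:2510.03131 — 5 statements merged into one kernel-verified Lean document; each statement's English description precedes it below -/
import Mathlib

section
/- Let H be a real separable Hilbert space and V_1, …, V_n be H-valued random variables that are independent, have mean zero, and satisfy ‖V_i‖ ≤ B almost surely for a deterministic constant B < ∞. Then for every ε with 0 < ε < 2B, P(‖(1/n)∑_{i=1}^n V_i‖ > ε) ≤ 2 exp(−n ε² / (4B²)). -/
open MeasureTheory ProbabilityTheory

section PinelisAux

open Real

lemma aux_sinh_le {w : ℝ} (hw : 0 ≤ w) : Real.sinh w ≤ w * Real.cosh w := by
  have h : MonotoneOn (fun w : ℝ => w * Real.cosh w - Real.sinh w) (Set.Ici 0) := by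
    apply monotoneOn_of_deriv_nonneg (convex_Ici 0)
    · exact ((continuous_id.mul Real.continuous_cosh).sub Real.continuous_sinh).continuousOn
    · intro x _
      exact (((differentiable_id.mul Real.differentiable_cosh).sub
        Real.differentiable_sinh) x).differentiableWithinAt
    · intro x hx
      rw [interior_Ici, Set.mem_Ioi] at hx
      have hd : HasDerivAt (fun w : ℝ => w * Real.cosh w - Real.sinh w)
          (1 * Real.cosh x + x * Real.sinh x - Real.cosh x) x :=
        ((hasDerivAt_id x).mul (Real.hasDerivAt_cosh x)).sub (Real.hasDerivAt_sinh x)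
      rw [hd.deriv]
      have hs : 0 ≤ Real.sinh x := Real.sinh_nonneg_iff.2 hx.le
      nlinarith
  have h0 := h Set.self_mem_Ici hw hw
  simp only [Real.cosh_zero, Real.sinh_zero, mul_zero, zero_mul, sub_zero] at h0
  linarith

lemma aux_sinh_div_mono : MonotoneOn (fun w : ℝ => Real.sinh w / w) (Set.Ioi 0) := by
  apply monotoneOn_of_deriv_nonneg (convex_Ioi 0)
  · exact Real.continuous_sinh.continuousOn.div continuousOn_id
      (fun x hx => ne_of_gt hx)
  · intro x hx
    rw [interior_Ioi, Set.mem_Ioi] at hx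
    exact ((Real.differentiable_sinh x).div (differentiableAt_id) hx.ne').differentiableWithinAt
  · intro x hx
    rw [interior_Ioi, Set.mem_Ioi] at hx
    have hd : HasDerivAt (fun w : ℝ => Real.sinh w / w)
        ((Real.cosh x * x - Real.sinh x * 1) / x ^ 2) x :=
      (Real.hasDerivAt_sinh x).div (hasDerivAt_id x) hx.ne'
    rw [hd.deriv]
    have := aux_sinh_le hx.le
    have hx2 : (0:ℝ) < x ^ 2 := by positivity
    apply div_nonneg _ hx2.le
    nlinarith

lemma aux_convex {t : ℝ} (ht : 0 ≤ t) :
    ConvexOn ℝ (Set.Ici 0) (fun u : ℝ => Real.cosh (t * Real.sqrt u)) := by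
  rcases eq_or_lt_of_le ht with h0 | ht
  · simp only [← h0, zero_mul, Real.cosh_zero]
    exact convexOn_const 1 (convex_Ici 0)
  apply MonotoneOn.convexOn_of_deriv (convex_Ici 0)
  · exact (Real.continuous_cosh.comp (continuous_const.mul Real.continuous_sqrt)).continuousOn
  · intro u hu
    rw [interior_Ici, Set.mem_Ioi] at hu
    have hd : HasDerivAt (fun u : ℝ => Real.cosh (t * Real.sqrt u))
        (Real.sinh (t * Real.sqrt u) * (t * (1 / (2 * Real.sqrt u)))) u :=
      (Real.hasDerivAt_cosh _).comp u ((Real.hasDerivAt_sqrt hu.ne').const_mul t)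
    exact hd.differentiableAt.differentiableWithinAt
  · rw [interior_Ici]
    have key : ∀ u ∈ Set.Ioi (0:ℝ), deriv (fun u : ℝ => Real.cosh (t * Real.sqrt u)) u
        = (t ^ 2 / 2) * (Real.sinh (t * Real.sqrt u) / (t * Real.sqrt u)) := by
      intro u hu
      rw [Set.mem_Ioi] at hu
      have hd : HasDerivAt (fun u : ℝ => Real.cosh (t * Real.sqrt u))
          (Real.sinh (t * Real.sqrt u) * (t * (1 / (2 * Real.sqrt u)))) u :=
        (Real.hasDerivAt_cosh _).comp u ((Real.hasDerivAt_sqrt hu.ne').const_mul t)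
      rw [hd.deriv]
      have hsu : 0 < Real.sqrt u := Real.sqrt_pos.2 hu
      field_simp
    intro u1 h1 u2 h2 h12
    rw [key u1 h1, key u2 h2]
    apply mul_le_mul_of_nonneg_left _ (by positivity)
    have hs1 : 0 < Real.sqrt u1 := Real.sqrt_pos.2 h1
    have hs2 : 0 < Real.sqrt u2 := Real.sqrt_pos.2 h2
    exact aux_sinh_div_mono (Set.mem_Ioi.2 (by positivity)) (Set.mem_Ioi.2 (by positivity))
      (mul_le_mul_of_nonneg_left (Real.sqrt_le_sqrt h12) ht.le)

lemma aux_chord {t a b s : ℝ} (ht : 0 ≤ t) (ha : 0 ≤ a) (hb : 0 ≤ b)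
    (hs : |s| ≤ a * b) :
    Real.cosh (t * Real.sqrt (a ^ 2 + b ^ 2 + 2 * s)) ≤
      Real.cosh (t * a) * Real.cosh (t * b)
        + Real.sinh (t * a) * Real.sinh (t * b) / (a * b) * s := by
  rcases eq_or_lt_of_le (mul_nonneg ha hb) with hab | hab
  · have hs0 : s = 0 := by
      have h1 : |s| ≤ 0 := by rw [← hab] at hs; exact hs
      exact abs_eq_zero.1 (le_antisymm h1 (abs_nonneg s))
    subst hs0
    rcases mul_eq_zero.1 hab.symm with h | h
    · subst h
      simp [Real.sqrt_sq hb]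
    · subst h
      simp [Real.sqrt_sq ha]
  · have ha' : 0 < a := by nlinarith
    have hb' : 0 < b := by nlinarith
    set θ : ℝ := (s + a * b) / (2 * (a * b)) with hθ
    have hθ0 : 0 ≤ θ := by
      apply div_nonneg _ (by positivity)
      have := abs_le.1 hs
      linarith [this.1]
    have hθ1 : θ ≤ 1 := by
      rw [div_le_one (by positivity)]
      have := abs_le.1 hs
      linarith [this.2]
    have hmem1 : ((a + b) ^ 2 : ℝ) ∈ Set.Ici (0:ℝ) := Set.mem_Ici.2 (by positivity)
    have hmem2 : ((a - b) ^ 2 : ℝ) ∈ Set.Ici (0:ℝ) := Set.mem_Ici.2 (by positivity)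
    have hcc := (aux_convex ht).2 hmem1 hmem2 hθ0 (sub_nonneg.2 hθ1) (by ring)
    simp only [smul_eq_mul] at hcc
    have harg : θ * (a + b) ^ 2 + (1 - θ) * (a - b) ^ 2 = a ^ 2 + b ^ 2 + 2 * s := by
      rw [hθ]; field_simp; ring
    rw [harg] at hcc
    refine hcc.trans (le_of_eq ?_)
    rw [Real.sqrt_sq (by positivity), Real.sqrt_sq_eq_abs]
    have habs : Real.cosh (t * |a - b|) = Real.cosh (t * (a - b)) := by
      rw [← Real.cosh_abs (t * (a - b)), abs_mul, abs_of_nonneg ht]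
    rw [habs, mul_add, mul_sub, Real.cosh_add, Real.cosh_sub, hθ]
    field_simp
    ring

lemma aux_vec {H : Type*} [NormedAddCommGroup H] [InnerProductSpace ℝ H]
    {t b : ℝ} (ht : 0 ≤ t) (hb : 0 ≤ b) (x v : H) (hv : ‖v‖ ≤ b) :
    Real.cosh (t * ‖x + v‖) ≤ Real.cosh (t * ‖x‖) * Real.cosh (t * b)
      + Real.sinh (t * ‖x‖) * Real.sinh (t * b) / (‖x‖ * b) * (inner ℝ x v : ℝ) := by
  have hs : |(inner ℝ x v : ℝ)| ≤ ‖x‖ * b :=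
    (abs_real_inner_le_norm x v).trans
      (mul_le_mul_of_nonneg_left hv (norm_nonneg x))
  have h1 : ‖x + v‖ ≤ Real.sqrt (‖x‖ ^ 2 + b ^ 2 + 2 * (inner ℝ x v : ℝ)) := by
    rw [← Real.sqrt_sq (norm_nonneg (x + v))]
    apply Real.sqrt_le_sqrt
    have h2 := norm_add_sq_real x v
    nlinarith [norm_nonneg v]
  calc Real.cosh (t * ‖x + v‖) ≤
      Real.cosh (t * Real.sqrt (‖x‖ ^ 2 + b ^ 2 + 2 * (inner ℝ x v : ℝ))) := by
        rw [Real.cosh_le_cosh, abs_of_nonneg (by positivity),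
          abs_of_nonneg (by positivity)]
        exact mul_le_mul_of_nonneg_left h1 ht
    _ ≤ _ := aux_chord ht (norm_nonneg x) hb hs

lemma aux_step {Ω : Type*} [MeasurableSpace Ω] (μ : MeasureTheory.Measure Ω)
    [IsProbabilityMeasure μ]
    {H : Type*} [NormedAddCommGroup H] [InnerProductSpace ℝ H]
    [MeasurableSpace H] [BorelSpace H] [SecondCountableTopology H] [CompleteSpace H]
    {t b : ℝ} (ht : 0 ≤ t) (hb : 0 ≤ b) (W : Ω → H) (hWm : Measurable W)
    (hWb : ∀ᵐ ω ∂μ, ‖W ω‖ ≤ b) (hW0 : ∫ ω, W ω ∂μ = 0) (x : H) :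
    ∫ ω, Real.cosh (t * ‖x + W ω‖) ∂μ ≤ Real.cosh (t * ‖x‖) * Real.cosh (t * b) := by
  have hWint : Integrable W μ :=
    (integrable_const b).mono' hWm.aestronglyMeasurable hWb
  have hmeasC : Measurable fun ω => Real.cosh (t * ‖x + W ω‖) :=
    (Real.continuous_cosh.comp (continuous_const.mul continuous_norm)).measurable.comp
      (measurable_const.add hWm)
  have hintC : Integrable (fun ω => Real.cosh (t * ‖x + W ω‖)) μ := by
    apply (integrable_const (Real.cosh (t * (‖x‖ + b)))).mono'
      hmeasC.aestronglyMeasurable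
    filter_upwards [hWb] with ω hω
    rw [Real.norm_eq_abs, abs_of_pos (Real.cosh_pos _)]
    rw [Real.cosh_le_cosh, abs_of_nonneg (by positivity), abs_of_nonneg (by positivity)]
    have : ‖x + W ω‖ ≤ ‖x‖ + b := (norm_add_le x (W ω)).trans (by linarith)
    exact mul_le_mul_of_nonneg_left this ht
  set c : ℝ := Real.sinh (t * ‖x‖) * Real.sinh (t * b) / (‖x‖ * b) with hc
  have hintI : Integrable (fun ω => (inner ℝ x (W ω) : ℝ)) μ := hWint.const_inner (𝕜 := ℝ) x
  have hintG : Integrable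
      (fun ω => Real.cosh (t * ‖x‖) * Real.cosh (t * b) + c * (inner ℝ x (W ω) : ℝ)) μ :=
    (integrable_const _).add (hintI.const_mul c)
  have hmono : ∫ ω, Real.cosh (t * ‖x + W ω‖) ∂μ ≤
      ∫ ω, (Real.cosh (t * ‖x‖) * Real.cosh (t * b) + c * (inner ℝ x (W ω) : ℝ)) ∂μ := by
    apply integral_mono_ae hintC hintG
    filter_upwards [hWb] with ω hω
    exact aux_vec ht hb x (W ω) hω
  refine hmono.trans (le_of_eq ?_)
  rw [integral_add (integrable_const _) (hintI.const_mul c), integral_const,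
    integral_const_mul, integral_inner hWint, hW0, inner_zero_right]
  simp

lemma aux_sum {Ω : Type*} [MeasurableSpace Ω] (μ : MeasureTheory.Measure Ω)
    [IsProbabilityMeasure μ]
    {H : Type*} [NormedAddCommGroup H] [InnerProductSpace ℝ H]
    [MeasurableSpace H] [BorelSpace H] [SecondCountableTopology H] [CompleteSpace H]
    {n : ℕ} (V : Fin n → Ω → H)
    (hindep : iIndepFun V μ)
    (hmeas : ∀ i, Measurable (V i))
    (hmean : ∀ i, ∫ ω, V i ω ∂μ = 0)
    {B : ℝ} (hB0 : 0 ≤ B) (hB : ∀ i, ∀ᵐ ω ∂μ, ‖V i ω‖ ≤ B)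
    {t : ℝ} (ht : 0 ≤ t) :
    ∀ s : Finset (Fin n), ∫ ω, Real.cosh (t * ‖∑ i ∈ s, V i ω‖) ∂μ
      ≤ Real.cosh (t * B) ^ s.card := by
  intro s
  induction s using Finset.induction_on with
  | empty => simp
  | @insert i s hi ih =>
    have hSmeas : Measurable (fun ω => ∑ j ∈ s, V j ω) :=
      Finset.measurable_sum s (fun j _ => hmeas j)
    have hSbound : ∀ᵐ ω ∂μ, ‖∑ j ∈ s, V j ω‖ ≤ s.card * B := by
      filter_upwards [ae_all_iff.2 hB] with ω hω
      calc ‖∑ j ∈ s, V j ω‖ ≤ ∑ j ∈ s, ‖V j ω‖ := norm_sum_le _ _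
        _ ≤ ∑ _j ∈ s, B := Finset.sum_le_sum fun j _ => hω j
        _ = s.card * B := by simp [mul_comm]
    have hIndep : IndepFun (fun ω => ∑ j ∈ s, V j ω) (V i) μ := by
      have h := hindep.indepFun_finset_sum_of_notMem hmeas hi
      have he : (∑ j ∈ s, V j) = fun ω => ∑ j ∈ s, V j ω := by
        funext ω; simp [Finset.sum_apply]
      rwa [he] at h
    have hpair : AEMeasurable (fun ω => ((∑ j ∈ s, V j ω), V i ω)) μ :=
      (hSmeas.prodMk (hmeas i)).aemeasurable
    have hmap : μ.map (fun ω => ((∑ j ∈ s, V j ω), V i ω))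
        = (μ.map (fun ω => ∑ j ∈ s, V j ω)).prod (μ.map (V i)) :=
      (indepFun_iff_map_prod_eq_prod_map_map hSmeas.aemeasurable
        (hmeas i).aemeasurable).1 hIndep
    haveI : IsProbabilityMeasure (μ.map (fun ω => ∑ j ∈ s, V j ω)) :=
      Measure.isProbabilityMeasure_map hSmeas.aemeasurable
    haveI : IsProbabilityMeasure (μ.map (V i)) :=
      Measure.isProbabilityMeasure_map (hmeas i).aemeasurable
    set f : H × H → ℝ := fun p => Real.cosh (t * ‖p.1 + p.2‖) with hf
    have hfc : Continuous f :=
      Real.continuous_cosh.comp (continuous_const.mul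
        (continuous_norm.comp (continuous_fst.add continuous_snd)))
    -- integrability of f with respect to the product measure
    have hintf : Integrable f
        ((μ.map (fun ω => ∑ j ∈ s, V j ω)).prod (μ.map (V i))) := by
      rw [← hmap]
      rw [integrable_map_measure hfc.aestronglyMeasurable hpair]
      apply (integrable_const (Real.cosh (t * (s.card * B + B)))).mono'
        (hfc.measurable.comp (hSmeas.prodMk (hmeas i))).aestronglyMeasurable
      filter_upwards [hSbound, hB i] with ω h1 h2
      simp only [Function.comp_apply, hf, Real.norm_eq_abs,
        abs_of_pos (Real.cosh_pos _)]
      rw [Real.cosh_le_cosh, abs_of_nonneg (by positivity),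
        abs_of_nonneg (by positivity)]
      apply mul_le_mul_of_nonneg_left _ ht
      exact (norm_add_le _ _).trans (by linarith)
    have hsetB : MeasurableSet {y : H | ‖y‖ ≤ B} :=
      measurableSet_le measurable_norm measurable_const
    have hinner : ∀ x : H, ∫ y, f (x, y) ∂(μ.map (V i))
        ≤ Real.cosh (t * ‖x‖) * Real.cosh (t * B) := by
      intro x
      refine aux_step (μ.map (V i)) ht hB0 id measurable_id ?_ ?_ x
      · simp only [id_eq]
        rw [MeasureTheory.ae_map_iff (hmeas i).aemeasurable hsetB]
        exact hB i
      · rw [integral_map (hmeas i).aemeasurable aestronglyMeasurable_id]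
        exact hmean i
    have hcoshm : Measurable (fun x : H => Real.cosh (t * ‖x‖)) :=
      (Real.continuous_cosh.comp (continuous_const.mul continuous_norm)).measurable
    have hcoshint : Integrable (fun x : H => Real.cosh (t * ‖x‖))
        (μ.map (fun ω => ∑ j ∈ s, V j ω)) := by
      apply (integrable_const (Real.cosh (t * (s.card * B)))).mono'
        hcoshm.aestronglyMeasurable
      have hae : ∀ᵐ x ∂(μ.map (fun ω => ∑ j ∈ s, V j ω)), ‖x‖ ≤ s.card * B := by
        rw [MeasureTheory.ae_map_iff hSmeas.aemeasurable
          (measurableSet_le measurable_norm measurable_const)]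
        exact hSbound
      filter_upwards [hae] with x hx
      rw [Real.norm_eq_abs, abs_of_pos (Real.cosh_pos _)]
      rw [Real.cosh_le_cosh, abs_of_nonneg (by positivity),
        abs_of_nonneg (by positivity)]
      exact mul_le_mul_of_nonneg_left hx ht
    have hstep1 : ∀ ω, Real.cosh (t * ‖∑ j ∈ insert i s, V j ω‖)
        = f ((∑ j ∈ s, V j ω), V i ω) := by
      intro ω
      rw [Finset.sum_insert hi]
      simp [hf, add_comm]
    calc ∫ ω, Real.cosh (t * ‖∑ j ∈ insert i s, V j ω‖) ∂μ
        = ∫ ω, f ((∑ j ∈ s, V j ω), V i ω) ∂μ := by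
          exact integral_congr_ae (Filter.Eventually.of_forall hstep1)
      _ = ∫ p, f p ∂(μ.map (fun ω => ((∑ j ∈ s, V j ω), V i ω))) :=
          (integral_map hpair hfc.aestronglyMeasurable).symm
      _ = ∫ x, ∫ y, f (x, y) ∂(μ.map (V i)) ∂(μ.map (fun ω => ∑ j ∈ s, V j ω)) := by
          rw [hmap]; exact integral_prod f hintf
      _ ≤ ∫ x, Real.cosh (t * ‖x‖) * Real.cosh (t * B)
            ∂(μ.map (fun ω => ∑ j ∈ s, V j ω)) := by
          exact integral_mono hintf.integral_prod_left
            (hcoshint.mul_const _) hinner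
      _ = Real.cosh (t * B) * ∫ x, Real.cosh (t * ‖x‖)
            ∂(μ.map (fun ω => ∑ j ∈ s, V j ω)) := by
          rw [← integral_const_mul]; congr 1; funext x; ring
      _ = Real.cosh (t * B) * ∫ ω, Real.cosh (t * ‖∑ j ∈ s, V j ω‖) ∂μ := by
          rw [integral_map hSmeas.aemeasurable hcoshm.aestronglyMeasurable]
      _ ≤ Real.cosh (t * B) * Real.cosh (t * B) ^ s.card := by
          apply mul_le_mul_of_nonneg_left ih (Real.cosh_pos _).le
      _ = Real.cosh (t * B) ^ (insert i s).card := by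
          rw [Finset.card_insert_of_notMem hi, pow_succ]; ring

end PinelisAux

/-- **Pinelis/Bernstein-type concentration in Hilbert space.** For independent
mean-zero `H`-valued random variables with `‖Vᵢ‖ ≤ B` a.s., and every
`0 < ε < 2B`, `P(‖(1/n)∑Vᵢ‖ > ε) ≤ 2 exp(−nε²/(4B²))`. -/
theorem stmt4
    {Ω : Type*} [MeasurableSpace Ω] (μ : Measure Ω) [IsProbabilityMeasure μ]
    {H : Type*} [NormedAddCommGroup H] [InnerProductSpace ℝ H]
    [MeasurableSpace H] [BorelSpace H] [SecondCountableTopology H] [CompleteSpace H]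
    {n : ℕ} (hn : 0 < n)
    (V : Fin n → Ω → H)
    (hindep : iIndepFun V μ)
    (hmeas : ∀ i, Measurable (V i))
    (hmean : ∀ i, ∫ ω, V i ω ∂μ = 0)
    (B : ℝ) (hBpos : 0 < B) (hB : ∀ i, ∀ᵐ ω ∂μ, ‖V i ω‖ ≤ B)
    (ε : ℝ) (hε : 0 < ε) (hε2B : ε < 2 * B) :
    (μ {ω | ε < ‖(n : ℝ)⁻¹ • (∑ i, V i ω)‖}).toReal
      ≤ 2 * Real.exp (-(n * ε ^ 2) / (4 * B ^ 2)) := by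
  set t : ℝ := ε / (2 * B ^ 2) with hts
  have ht : 0 < t := by positivity
  set S : Ω → H := fun ω => ∑ i, V i ω with hS
  have hSmeas : Measurable S := Finset.measurable_sum _ (fun j _ => hmeas j)
  have hSbound : ∀ᵐ ω ∂μ, ‖S ω‖ ≤ n * B := by
    filter_upwards [ae_all_iff.2 hB] with ω hω
    calc ‖∑ i, V i ω‖ ≤ ∑ i, ‖V i ω‖ := norm_sum_le _ _
      _ ≤ ∑ _i : Fin n, B := Finset.sum_le_sum fun j _ => hω j
      _ = n * B := by simp [mul_comm]
  have hcoshmeas : Measurable (fun ω => Real.cosh (t * ‖S ω‖)) :=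
    (Real.continuous_cosh.comp (continuous_const.mul continuous_norm)).measurable.comp
      hSmeas
  have hcoshint : Integrable (fun ω => Real.cosh (t * ‖S ω‖)) μ := by
    apply (integrable_const (Real.cosh (t * (n * B)))).mono'
      hcoshmeas.aestronglyMeasurable
    filter_upwards [hSbound] with ω hω
    rw [Real.norm_eq_abs, abs_of_pos (Real.cosh_pos _), Real.cosh_le_cosh,
      abs_of_nonneg (by positivity), abs_of_nonneg (by positivity)]
    exact mul_le_mul_of_nonneg_left hω ht.le
  have hexpmeas : Measurable (fun ω => Real.exp (t * ‖S ω‖)) :=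
    (Real.continuous_exp.comp (continuous_const.mul continuous_norm)).measurable.comp
      hSmeas
  have hexpint : Integrable (fun ω => Real.exp (t * ‖S ω‖)) μ := by
    apply (integrable_const (Real.exp (t * (n * B)))).mono'
      hexpmeas.aestronglyMeasurable
    filter_upwards [hSbound] with ω hω
    rw [Real.norm_eq_abs, abs_of_pos (Real.exp_pos _), Real.exp_le_exp]
    exact mul_le_mul_of_nonneg_left hω ht.le
  -- Markov
  have hsub : {ω | ε < ‖(n : ℝ)⁻¹ • (∑ i, V i ω)‖}
      ⊆ {ω | Real.exp (t * (n * ε)) ≤ Real.exp (t * ‖S ω‖)} := by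
    intro ω hω
    simp only [Set.mem_setOf_eq] at hω ⊢
    rw [norm_smul, Real.norm_eq_abs, abs_of_nonneg (by positivity)] at hω
    have hn' : (0:ℝ) < n := by exact_mod_cast hn
    have h1 : (n:ℝ) * ε < ‖∑ i, V i ω‖ := by
      calc (n:ℝ) * ε < (n:ℝ) * ((n:ℝ)⁻¹ * ‖∑ i, V i ω‖) :=
            mul_lt_mul_of_pos_left hω hn'
        _ = ‖∑ i, V i ω‖ := by field_simp
    rw [Real.exp_le_exp]
    exact mul_le_mul_of_nonneg_left h1.le ht.le
  have hmarkov := mul_meas_ge_le_integral_of_nonneg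
    (Filter.Eventually.of_forall (fun ω => (Real.exp_pos (t * ‖S ω‖)).le))
    hexpint (Real.exp (t * (n * ε)))
  have hmeasmono : μ {ω | ε < ‖(n : ℝ)⁻¹ • (∑ i, V i ω)‖}
      ≤ μ {ω | Real.exp (t * (n * ε)) ≤ Real.exp (t * ‖S ω‖)} := measure_mono hsub
  have htoReal : (μ {ω | ε < ‖(n : ℝ)⁻¹ • (∑ i, V i ω)‖}).toReal
      ≤ (μ {ω | Real.exp (t * (n * ε)) ≤ Real.exp (t * ‖S ω‖)}).toReal :=
    ENNReal.toReal_mono (measure_ne_top _ _) hmeasmono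
  -- Integral bound
  have hint2 : ∫ ω, Real.exp (t * ‖S ω‖) ∂μ ≤ 2 * Real.cosh (t * B) ^ n := by
    have h1 : ∫ ω, Real.exp (t * ‖S ω‖) ∂μ ≤ ∫ ω, 2 * Real.cosh (t * ‖S ω‖) ∂μ := by
      apply integral_mono hexpint (hcoshint.const_mul 2)
      intro ω
      show Real.exp (t * ‖S ω‖) ≤ 2 * Real.cosh (t * ‖S ω‖)
      rw [Real.cosh_eq]
      have := (Real.exp_pos (-(t * ‖S ω‖))).le
      linarith
    rw [integral_const_mul] at h1
    have h2 := aux_sum μ V hindep hmeas hmean hBpos.le hB ht.le Finset.univ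
    simp only [Finset.card_univ, Fintype.card_fin] at h2
    calc ∫ ω, Real.exp (t * ‖S ω‖) ∂μ
        ≤ 2 * ∫ ω, Real.cosh (t * ‖S ω‖) ∂μ := h1
      _ ≤ 2 * Real.cosh (t * B) ^ n := by linarith
  -- assemble
  have hexpTne : (0:ℝ) < Real.exp (t * (n * ε)) := Real.exp_pos _
  have hfinal : (μ {ω | ε < ‖(n : ℝ)⁻¹ • (∑ i, V i ω)‖}).toReal
      ≤ (2 * Real.cosh (t * B) ^ n) / Real.exp (t * (n * ε)) := by
    rw [le_div_iff₀ hexpTne]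
    calc (μ {ω | ε < ‖(n : ℝ)⁻¹ • (∑ i, V i ω)‖}).toReal * Real.exp (t * (n * ε))
        ≤ (μ {ω | Real.exp (t * (n * ε)) ≤ Real.exp (t * ‖S ω‖)}).toReal
            * Real.exp (t * (n * ε)) := by
          exact mul_le_mul_of_nonneg_right htoReal hexpTne.le
      _ ≤ ∫ ω, Real.exp (t * ‖S ω‖) ∂μ := by rw [mul_comm]; exact hmarkov
      _ ≤ 2 * Real.cosh (t * B) ^ n := hint2
  refine hfinal.trans ?_
  have hcosh : Real.cosh (t * B) ^ n ≤ Real.exp ((n:ℝ) * ((t * B) ^ 2 / 2)) := by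
    calc Real.cosh (t * B) ^ n ≤ Real.exp ((t * B) ^ 2 / 2) ^ n :=
          pow_le_pow_left₀ (Real.cosh_pos _).le (Real.cosh_le_exp_half_sq _) n
      _ = Real.exp ((n:ℝ) * ((t * B) ^ 2 / 2)) := by
          rw [← Real.exp_nat_mul]
  have hB2 : (0:ℝ) < B ^ 2 := by positivity
  calc (2 * Real.cosh (t * B) ^ n) / Real.exp (t * (n * ε))
      ≤ (2 * Real.exp ((n:ℝ) * ((t * B) ^ 2 / 2))) / Real.exp (t * (n * ε)) := by
        exact (div_le_div_iff_of_pos_right hexpTne).2 (by linarith)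
    _ = 2 * Real.exp ((n:ℝ) * ((t * B) ^ 2 / 2) - t * (n * ε)) := by
        rw [Real.exp_sub]; ring
    _ ≤ 2 * Real.exp (-(n * ε ^ 2) / (4 * B ^ 2)) := by
        apply mul_le_mul_of_nonneg_left _ (by norm_num)
        rw [Real.exp_le_exp, hts]
        have hn0 : (0:ℝ) ≤ (n:ℝ) := Nat.cast_nonneg n
        have key : (n:ℝ) * ((ε / (2 * B ^ 2) * B) ^ 2 / 2) - ε / (2 * B ^ 2) * ((n:ℝ) * ε)
            = -(3 * ((n:ℝ) * ε ^ 2)) / (8 * B ^ 2) := by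
          field_simp
          ring
        rw [key, div_le_div_iff₀ (by positivity) (by positivity)]
        nlinarith [mul_nonneg (mul_nonneg hn0 (sq_nonneg ε)) hB2.le]
end

section
/- Let k_X and k_Y be bounded, non-negative, measurable positive-definite kernels on spaces X and Y with k_Y ≤ κ_Y, and define the product kernel k((x,y),(x',y')) = k_X(x,x') k_Y(y,y'). Fix a probability measure P_Y on Y and measurable families of conditionals P_{X|y}, Q_{X|y}. Form joint laws P̃(dx,dy) = P_Y(dy) P_{X|y}(dx) and Q̃(dx,dy) = P_Y(dy) Q_{X|y}(dx). Then MMD_k(P̃, Q̃) ≤ √κ_Y · E_{Y∼P_Y}[ MMD_{k_X}(P_{X|Y}, Q_{X|Y}) ]. -/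
open MeasureTheory

/-- **Joint–conditional MMD reduction for product kernels.** With bounded non-negative
kernels `k_X`, `k_Y ≤ κ_Y`, product kernel feature map `Φ` (so that
`⟪Φ x y, Φ x' y'⟫ = k_X x x' · k_Y y y'`), a mixing law `P_Y` and conditionals
`P_{X|y}`, `Q_{X|y}`, the MMD between the joint laws `P_Y(dy)P_{X|y}(dx)` and
`P_Y(dy)Q_{X|y}(dx)` is at most `√κ_Y` times the `P_Y`-expectation of the
conditional MMDs computed with `k_X`. -/
theorem stmt7
    {X Y : Type*} [MeasurableSpace X] [MeasurableSpace Y]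
    {HX H : Type*}
    [NormedAddCommGroup HX] [InnerProductSpace ℝ HX] [CompleteSpace HX]
    [NormedAddCommGroup H] [InnerProductSpace ℝ H] [CompleteSpace H]
    (kX : X → X → ℝ) (kY : Y → Y → ℝ) (κY : ℝ)
    (φX : X → HX) (Φ : X → Y → H)
    (hkX : ∀ x x', kX x x' = inner ℝ (φX x) (φX x'))
    (hΦ : ∀ x y x' y', (inner ℝ (Φ x y) (Φ x' y') : ℝ) = kX x x' * kY y y')
    (hkXnn : ∀ x x', 0 ≤ kX x x') (hkYnn : ∀ y y', 0 ≤ kY y y')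
    (hkYb : ∀ y y', kY y y' ≤ κY)
    (PY : Measure Y) [IsProbabilityMeasure PY]
    (PX QX : Y → Measure X)
    [∀ y, IsProbabilityMeasure (PX y)] [∀ y, IsProbabilityMeasure (QX y)]
    (hintP : ∀ y, Integrable (fun x => Φ x y) (PX y))
    (hintQ : ∀ y, Integrable (fun x => Φ x y) (QX y))
    (hiP : Integrable (fun y => ∫ x, Φ x y ∂(PX y)) PY)
    (hiQ : Integrable (fun y => ∫ x, Φ x y ∂(QX y)) PY)
    (hintPX : ∀ y, Integrable φX (PX y)) (hintQX : ∀ y, Integrable φX (QX y))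
    (hMMDint : Integrable (fun y => ‖(∫ x, φX x ∂(PX y)) - ∫ x, φX x ∂(QX y)‖) PY) :
    ‖(∫ y, (∫ x, Φ x y ∂(PX y)) ∂PY) - ∫ y, (∫ x, Φ x y ∂(QX y)) ∂PY‖
      ≤ Real.sqrt κY * ∫ y, ‖(∫ x, φX x ∂(PX y)) - ∫ x, φX x ∂(QX y)‖ ∂PY := by

  -- key bilinear identity
  have key : ∀ (y : Y) (μ ν : Measure X), Integrable (fun x => Φ x y) μ →
      Integrable (fun x => Φ x y) ν → Integrable φX μ → Integrable φX ν →
      (inner ℝ (∫ x, Φ x y ∂μ) (∫ x, Φ x y ∂ν) : ℝ)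
        = kY y y * inner ℝ (∫ x, φX x ∂μ) (∫ x, φX x ∂ν) := by
    intro y μ ν hμ hν hμX hνX
    rw [← integral_inner hν]
    have step : ∀ x', (inner ℝ (∫ x, Φ x y ∂μ) (Φ x' y) : ℝ)
        = kY y y * inner ℝ (φX x') (∫ x, φX x ∂μ) := by
      intro x'
      rw [real_inner_comm, ← integral_inner hμ]
      calc ∫ x, (inner ℝ (Φ x' y) (Φ x y) : ℝ) ∂μ
          = ∫ x, kY y y * (inner ℝ (φX x') (φX x) : ℝ) ∂μ := by
            refine integral_congr_ae (Filter.Eventually.of_forall fun x => ?_)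
            simp only [hΦ, hkX]; ring
        _ = kY y y * ∫ x, (inner ℝ (φX x') (φX x) : ℝ) ∂μ := integral_const_mul _ _
        _ = kY y y * inner ℝ (φX x') (∫ x, φX x ∂μ) := by rw [integral_inner hμX]
    calc ∫ x', (inner ℝ (∫ x, Φ x y ∂μ) (Φ x' y) : ℝ) ∂ν
        = ∫ x', kY y y * (inner ℝ (φX x') (∫ x, φX x ∂μ) : ℝ) ∂ν := by simp_rw [step]
      _ = kY y y * ∫ x', (inner ℝ (φX x') (∫ x, φX x ∂μ) : ℝ) ∂ν := integral_const_mul _ _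
      _ = kY y y * inner ℝ (∫ x, φX x ∂μ) (∫ x', φX x' ∂ν) := by
          have h : ∫ x', (inner ℝ (φX x') (∫ x, φX x ∂μ) : ℝ) ∂ν
              = ∫ x', (inner ℝ ((∫ x, φX x ∂μ)) (φX x') : ℝ) ∂ν :=
            integral_congr_ae (Filter.Eventually.of_forall fun x' => real_inner_comm _ _)
          rw [h, integral_inner hνX, real_inner_comm]
  -- pointwise bound
  have pw : ∀ y, ‖(∫ x, Φ x y ∂(PX y)) - ∫ x, Φ x y ∂(QX y)‖
      ≤ Real.sqrt κY * ‖(∫ x, φX x ∂(PX y)) - ∫ x, φX x ∂(QX y)‖ := by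
    intro y
    set a := (∫ x, Φ x y ∂(PX y)) - ∫ x, Φ x y ∂(QX y) with ha
    set b := (∫ x, φX x ∂(PX y)) - ∫ x, φX x ∂(QX y) with hb
    have hκ : 0 ≤ κY := (hkYnn y y).trans (hkYb y y)
    have hab : (inner ℝ a a : ℝ) = kY y y * inner ℝ b b := by
      simp only [ha, hb, inner_sub_left, inner_sub_right,
        key y _ _ (hintP y) (hintP y) (hintPX y) (hintPX y),
        key y _ _ (hintP y) (hintQ y) (hintPX y) (hintQX y),
        key y _ _ (hintQ y) (hintP y) (hintQX y) (hintPX y),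
        key y _ _ (hintQ y) (hintQ y) (hintQX y) (hintQX y)]
      ring
    have h2 : ‖a‖ ^ 2 ≤ κY * ‖b‖ ^ 2 := by
      rw [← real_inner_self_eq_norm_sq, ← real_inner_self_eq_norm_sq, hab]
      exact mul_le_mul_of_nonneg_right (hkYb y y) real_inner_self_nonneg
    calc ‖a‖ = Real.sqrt (‖a‖ ^ 2) := (Real.sqrt_sq (norm_nonneg a)).symm
      _ ≤ Real.sqrt (κY * ‖b‖ ^ 2) := Real.sqrt_le_sqrt h2
      _ = Real.sqrt κY * ‖b‖ := by
          rw [Real.sqrt_mul hκ, Real.sqrt_sq (norm_nonneg b)]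
  rw [← integral_sub hiP hiQ]
  calc ‖∫ y, ((∫ x, Φ x y ∂(PX y)) - ∫ x, Φ x y ∂(QX y)) ∂PY‖
      ≤ ∫ y, ‖(∫ x, Φ x y ∂(PX y)) - ∫ x, Φ x y ∂(QX y)‖ ∂PY :=
        norm_integral_le_integral_norm _
    _ ≤ ∫ y, Real.sqrt κY * ‖(∫ x, φX x ∂(PX y)) - ∫ x, φX x ∂(QX y)‖ ∂PY :=
        integral_mono_of_nonneg (Filter.Eventually.of_forall fun y => norm_nonneg _)
          (hMMDint.const_mul _) (Filter.Eventually.of_forall pw)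
    _ = Real.sqrt κY * ∫ y, ‖(∫ x, φX x ∂(PX y)) - ∫ x, φX x ∂(QX y)‖ ∂PY :=
        integral_const_mul _ _
end

section
/- Let P and Q be probability measures on the same space with P absolutely continuous with respect to Q. Then the total variation distance satisfies ‖P − Q‖_TV ≤ √(1 − exp(−KL(P‖Q))), where KL denotes the Kullback–Leibler divergence (Bretagnolle–Huber inequality). -/
open MeasureTheory

/-- **Bretagnolle–Huber inequality.** For probability measures `P ≪ Q`,
`‖P − Q‖_TV ≤ √(1 − exp(−KL(P‖Q)))`, where `‖P − Q‖_TV = (1/2)∫|dP/dQ − 1| dQ`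
and `KL(P‖Q) = ∫ log(dP/dQ) dP`. -/
theorem stmt8
    {α : Type*} [MeasurableSpace α]
    (P Q : Measure α) [IsProbabilityMeasure P] [IsProbabilityMeasure Q]
    (hac : P ≪ Q)
    (hkl : Integrable (fun x => Real.log (P.rnDeriv Q x).toReal) P) :
    (1 / 2) * ∫ x, |(P.rnDeriv Q x).toReal - 1| ∂Q
      ≤ Real.sqrt (1 - Real.exp (-∫ x, Real.log (P.rnDeriv Q x).toReal ∂P)) := by
  set f : α → ℝ := fun x => (P.rnDeriv Q x).toReal with hf_def
  have hf_meas : Measurable f := (Measure.measurable_rnDeriv P Q).ennreal_toReal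
  have hf_nonneg : ∀ x, 0 ≤ f x := fun x => ENNReal.toReal_nonneg
  have hf_int : Integrable f Q := Measure.integrable_toReal_rnDeriv
  have hf_int1 : ∫ x, f x ∂Q = 1 := by
    rw [hf_def, Measure.integral_toReal_rnDeriv hac]
    simp
  -- total variation
  set t : ℝ := (1 / 2) * ∫ x, |f x - 1| ∂Q with ht_def
  have habs_int : Integrable (fun x => |f x - 1|) Q := (hf_int.sub (integrable_const 1)).abs
  have ht_nonneg : 0 ≤ t := by
    have : 0 ≤ ∫ x, |f x - 1| ∂Q := integral_nonneg fun x => abs_nonneg _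
    positivity
  -- min and max integrals
  have hadd : Integrable (fun x => (1:ℝ)/2 * (f x + 1)) Q := by
    apply Integrable.const_mul
    exact hf_int.add (integrable_const 1)
  have habs2 : Integrable (fun x => (1:ℝ)/2 * |f x - 1|) Q := habs_int.const_mul _
  have hmineq : ∀ x, min (f x) 1 = (1:ℝ)/2 * (f x + 1) - (1:ℝ)/2 * |f x - 1| := by
    intro x
    rcases le_total (f x) 1 with h | h
    · rw [min_eq_left h, abs_of_nonpos (by linarith)]; ring
    · rw [min_eq_right h, abs_of_nonneg (by linarith)]; ring
  have hmaxeq : ∀ x, max (f x) 1 = (1:ℝ)/2 * (f x + 1) + (1:ℝ)/2 * |f x - 1| := by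
    intro x
    rcases le_total (f x) 1 with h | h
    · rw [max_eq_right h, abs_of_nonpos (by linarith)]; ring
    · rw [max_eq_left h, abs_of_nonneg (by linarith)]; ring
  have hmin_int : Integrable (fun x => min (f x) 1) Q :=
    (hadd.sub habs2).congr (Filter.Eventually.of_forall fun x => (hmineq x).symm)
  have hmax_int : Integrable (fun x => max (f x) 1) Q :=
    (hadd.add habs2).congr (Filter.Eventually.of_forall fun x => (hmaxeq x).symm)
  have haddint : ∫ x, (1:ℝ)/2 * (f x + 1) ∂Q = 1 := by
    have : ∫ x, f x + 1 ∂Q = 2 := by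
      rw [integral_add hf_int (integrable_const 1), hf_int1]
      simp
      norm_num
    calc ∫ x, (1:ℝ)/2 * (f x + 1) ∂Q = (1:ℝ)/2 * ∫ x, f x + 1 ∂Q := integral_const_mul _ _
      _ = 1 := by rw [this]; norm_num
  have hmin : ∫ x, min (f x) 1 ∂Q = 1 - t := by
    rw [integral_congr_ae (Filter.Eventually.of_forall hmineq), integral_sub hadd habs2,
      haddint, integral_const_mul, ht_def]
  have hmax : ∫ x, max (f x) 1 ∂Q = 1 + t := by
    rw [integral_congr_ae (Filter.Eventually.of_forall hmaxeq), integral_add hadd habs2,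
      haddint, integral_const_mul, ht_def]
  -- Cauchy–Schwarz: (∫ √f)² ≤ (1-t)(1+t)
  have hsplit : ∀ x, Real.sqrt (f x) = Real.sqrt (min (f x) 1) * Real.sqrt (max (f x) 1) := by
    intro x
    rw [← Real.sqrt_mul (le_min (hf_nonneg x) zero_le_one)]
    congr 1
    rcases le_total (f x) 1 with h | h
    · rw [min_eq_left h, max_eq_right h, mul_one]
    · rw [min_eq_right h, max_eq_left h, one_mul]
  have hconj : Real.HolderConjugate 2 2 := Real.holderConjugate_iff.mpr ⟨one_lt_two, by norm_num⟩
  have hmem_min : MemLp (fun x => Real.sqrt (min (f x) 1)) (ENNReal.ofReal 2) Q := by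
    have h2 : ENNReal.ofReal 2 = (2 : ENNReal) := by norm_num
    rw [h2, memLp_two_iff_integrable_sq
      ((hf_meas.min measurable_const).sqrt.aestronglyMeasurable)]
    refine hmin_int.congr (Filter.Eventually.of_forall fun x => ?_)
    show f x ⊓ 1 = √(f x ⊓ 1) ^ 2
    rw [sq, Real.mul_self_sqrt (le_min (hf_nonneg x) zero_le_one)]
  have hmem_max : MemLp (fun x => Real.sqrt (max (f x) 1)) (ENNReal.ofReal 2) Q := by
    have h2 : ENNReal.ofReal 2 = (2 : ENNReal) := by norm_num
    rw [h2, memLp_two_iff_integrable_sq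
      ((hf_meas.max measurable_const).sqrt.aestronglyMeasurable)]
    refine hmax_int.congr (Filter.Eventually.of_forall fun x => ?_)
    show f x ⊔ 1 = √(f x ⊔ 1) ^ 2
    rw [sq, Real.mul_self_sqrt (le_trans zero_le_one (le_max_right _ _))]
  have hCS : ∫ x, Real.sqrt (f x) ∂Q ≤ Real.sqrt (1 - t) * Real.sqrt (1 + t) := by
    calc ∫ x, Real.sqrt (f x) ∂Q
        = ∫ x, Real.sqrt (min (f x) 1) * Real.sqrt (max (f x) 1) ∂Q := by
          exact integral_congr_ae (Filter.Eventually.of_forall hsplit)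
      _ ≤ (∫ x, Real.sqrt (min (f x) 1) ^ (2:ℝ) ∂Q) ^ ((1:ℝ)/2)
          * (∫ x, Real.sqrt (max (f x) 1) ^ (2:ℝ) ∂Q) ^ ((1:ℝ)/2) :=
          integral_mul_le_Lp_mul_Lq_of_nonneg hconj
            (Filter.Eventually.of_forall fun x => Real.sqrt_nonneg _)
            (Filter.Eventually.of_forall fun x => Real.sqrt_nonneg _) hmem_min hmem_max
      _ = Real.sqrt (1 - t) * Real.sqrt (1 + t) := by
          have e1 : ∫ x, Real.sqrt (min (f x) 1) ^ (2:ℝ) ∂Q = 1 - t := by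
            rw [← hmin]
            refine integral_congr_ae (Filter.Eventually.of_forall fun x => ?_)
            show √(f x ⊓ 1) ^ (2:ℝ) = f x ⊓ 1
            rw [Real.rpow_two, sq, Real.mul_self_sqrt (le_min (hf_nonneg x) zero_le_one)]
          have e2 : ∫ x, Real.sqrt (max (f x) 1) ^ (2:ℝ) ∂Q = 1 + t := by
            rw [← hmax]
            refine integral_congr_ae (Filter.Eventually.of_forall fun x => ?_)
            show √(f x ⊔ 1) ^ (2:ℝ) = f x ⊔ 1
            rw [Real.rpow_two, sq, Real.mul_self_sqrt (le_trans zero_le_one (le_max_right _ _))]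
          rw [e1, e2, ← Real.sqrt_eq_rpow, ← Real.sqrt_eq_rpow]
  -- Jensen: exp(-KL/2) ≤ ∫ √f dQ
  set KL : ℝ := ∫ x, Real.log (f x) ∂P with hKL_def
  have hprod : ∀ x, f x * Real.exp (-(1/2) * Real.log (f x)) = Real.sqrt (f x) := by
    intro x
    rcases eq_or_lt_of_le (hf_nonneg x) with h | h
    · rw [← h]; simp
    · rw [show -(1/2) * Real.log (f x) = Real.log (f x) * (-(1/2)) by ring,
        ← Real.rpow_def_of_pos h]
      nth_rewrite 1 [← Real.rpow_one (f x)]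
      rw [← Real.rpow_add h, Real.sqrt_eq_rpow]
      norm_num
  have hexp_int : Integrable (fun x => Real.exp (-(1/2) * Real.log (f x))) P := by
    rw [← integrable_rnDeriv_smul_iff hac]
    simp only [smul_eq_mul]
    have hb : Integrable (fun x => f x + 1) Q := hf_int.add (integrable_const 1)
    refine hb.mono' ?_ (Filter.Eventually.of_forall fun x => ?_)
    · exact ((hf_meas.mul ((hf_meas.log.const_mul _).exp)).aestronglyMeasurable)
    · rw [hprod x, Real.norm_of_nonneg (Real.sqrt_nonneg _)]
      rcases le_total (f x) 1 with h | h
      · calc Real.sqrt (f x) ≤ Real.sqrt 1 := Real.sqrt_le_sqrt h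
          _ = 1 := Real.sqrt_one
          _ ≤ f x + 1 := by linarith [hf_nonneg x]
      · calc Real.sqrt (f x) ≤ Real.sqrt ((f x) ^ 2) := Real.sqrt_le_sqrt (by nlinarith)
          _ = f x := Real.sqrt_sq (hf_nonneg x)
          _ ≤ f x + 1 := by linarith
  have hlog_int : Integrable (fun x => -(1/2) * Real.log (f x)) P := hkl.const_mul _
  have hjensen : Real.exp (∫ x, -(1/2) * Real.log (f x) ∂P)
      ≤ ∫ x, Real.exp (-(1/2) * Real.log (f x)) ∂P :=
    convexOn_exp.map_integral_le Real.continuous_exp.continuousOn isClosed_univ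
      (Filter.Eventually.of_forall fun x => Set.mem_univ _) hlog_int hexp_int
  have hchange : ∫ x, Real.exp (-(1/2) * Real.log (f x)) ∂P = ∫ x, Real.sqrt (f x) ∂Q := by
    rw [← integral_rnDeriv_smul hac]
    simp only [smul_eq_mul]
    exact integral_congr_ae (Filter.Eventually.of_forall hprod)
  have hintlog : ∫ x, -(1/2) * Real.log (f x) ∂P = -(1/2) * KL := integral_const_mul _ _
  have hkey : Real.exp (-(1/2) * KL) ≤ Real.sqrt (1 - t) * Real.sqrt (1 + t) := by
    calc Real.exp (-(1/2) * KL) = Real.exp (∫ x, -(1/2) * Real.log (f x) ∂P) := by rw [hintlog]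
      _ ≤ ∫ x, Real.exp (-(1/2) * Real.log (f x)) ∂P := hjensen
      _ = ∫ x, Real.sqrt (f x) ∂Q := hchange
      _ ≤ Real.sqrt (1 - t) * Real.sqrt (1 + t) := hCS
  have h1t : 0 ≤ 1 - t := by
    rw [← hmin]
    exact integral_nonneg fun x => le_min (hf_nonneg x) zero_le_one
  have hsq : Real.exp (-KL) ≤ (1 - t) * (1 + t) := by
    have h := mul_le_mul hkey hkey (Real.exp_nonneg _) (by positivity)
    rw [← Real.exp_add] at h
    calc Real.exp (-KL) = Real.exp (-(1/2) * KL + -(1/2) * KL) := by ring_nf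
      _ ≤ (Real.sqrt (1 - t) * Real.sqrt (1 + t)) * (Real.sqrt (1 - t) * Real.sqrt (1 + t)) := h
      _ = (Real.sqrt (1 - t) * Real.sqrt (1 - t)) * (Real.sqrt (1 + t) * Real.sqrt (1 + t)) := by
          ring
      _ = (1 - t) * (1 + t) := by
          rw [Real.mul_self_sqrt h1t, Real.mul_self_sqrt (by linarith)]
  have ht2 : t ^ 2 ≤ 1 - Real.exp (-KL) := by nlinarith
  have hy : 0 ≤ 1 - Real.exp (-KL) := le_trans (by positivity) ht2
  exact (Real.le_sqrt ht_nonneg hy).mpr ht2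
end

section
/- Let k be a bounded positive-definite kernel on X with sup_x k(x,x) ≤ K, and let conditionals Π₀(·|w,y) and Π₁(·|w,y) be probability kernels from (w,y) to X with Π₀(·|w,y) absolutely continuous with respect to Π₁(·|w,y) for almost every (w,y). Let P⁰ be a probability measure on pairs (W,Y). Then E_{(W,Y)∼P⁰}[ MMD_k(Π₀(·|W,Y), Π₁(·|W,Y)) ] ≤ 2√K · √(1 − exp(−E_{(W,Y)∼P⁰} KL(Π₀(·|W,Y) ‖ Π₁(·|W,Y)))). -/
open MeasureTheory

lemma aux_bh {X : Type*} [MeasurableSpace X] (μ ν : Measure X)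
    [IsProbabilityMeasure μ] [IsProbabilityMeasure ν] (hμν : μ ≪ ν)
    (hlog : Integrable (fun x => Real.log (μ.rnDeriv ν x).toReal) μ) :
    Real.exp (-(∫ x, Real.log (μ.rnDeriv ν x).toReal ∂μ)) ≤ 1 ∧
    ∫ x, |(μ.rnDeriv ν x).toReal - 1| ∂ν
      ≤ 2 * Real.sqrt (1 - Real.exp (-(∫ x, Real.log (μ.rnDeriv ν x).toReal ∂μ))) := by
  set f : X → ℝ := fun x => (μ.rnDeriv ν x).toReal with hfdef
  set KL : ℝ := ∫ x, Real.log (f x) ∂μ with hKLdef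
  have hfm : Measurable f := (Measure.measurable_rnDeriv μ ν).ennreal_toReal
  have hf0 : ∀ x, 0 ≤ f x := fun x => ENNReal.toReal_nonneg
  have hfint : Integrable f ν := Measure.integrable_toReal_rnDeriv
  have hf1 : ∫ x, f x ∂ν = 1 := by
    rw [Measure.integral_toReal_rnDeriv hμν]; simp
  have hmin : Integrable (fun x => min (f x) 1) ν := by
    refine Integrable.mono' (integrable_const 1)
      ((hfm.min measurable_const).aestronglyMeasurable) (ae_of_all _ fun x => ?_)
    rw [Real.norm_eq_abs, abs_of_nonneg (le_min (hf0 x) zero_le_one)]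
    exact min_le_right _ _
  have hmax : Integrable (fun x => max (f x) 1) ν := by
    refine Integrable.mono' (hfint.add (integrable_const 1))
      ((hfm.max measurable_const).aestronglyMeasurable) (ae_of_all _ fun x => ?_)
    rw [Real.norm_eq_abs, abs_of_nonneg (le_max_of_le_right zero_le_one)]
    exact max_le (le_add_of_nonneg_right zero_le_one) (le_add_of_nonneg_left (hf0 x))
  set m : ℝ := ∫ x, min (f x) 1 ∂ν with hmdef
  set M : ℝ := ∫ x, max (f x) 1 ∂ν with hMdef
  have hmM : m + M = 2 := by
    rw [hmdef, hMdef, ← integral_add hmin hmax]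
    simp_rw [min_add_max]
    rw [integral_add hfint (integrable_const 1), hf1]
    simp
    norm_num
  have hm0 : 0 ≤ m := integral_nonneg fun x => le_min (hf0 x) zero_le_one
  have hm1 : m ≤ 1 := by
    have : m ≤ ∫ _x, (1 : ℝ) ∂ν :=
      integral_mono hmin (integrable_const 1) fun x => min_le_right _ _
    simpa using this
  have habs : ∫ x, |f x - 1| ∂ν = M - m := by
    rw [hMdef, hmdef, ← integral_sub hmax hmin]
    refine integral_congr_ae (ae_of_all _ fun x => ?_)
    show |f x - 1| = f x ⊔ 1 - f x ⊓ 1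
    rw [max_sub_min_eq_abs, abs_sub_comm]
  -- integrability of sqrt f
  have hsqle : ∀ x, Real.sqrt (f x) ≤ f x + 1 := fun x => by
    nlinarith [Real.sq_sqrt (hf0 x), Real.sqrt_nonneg (f x)]
  have hsqint : Integrable (fun x => Real.sqrt (f x)) ν := by
    refine Integrable.mono' (hfint.add (integrable_const 1))
      ((Real.continuous_sqrt.measurable.comp hfm).aestronglyMeasurable)
      (ae_of_all _ fun x => ?_)
    rw [Real.norm_eq_abs, abs_of_nonneg (Real.sqrt_nonneg _)]
    exact hsqle x
  -- Jensen: exp(-KL/2) ≤ ∫ sqrt f dν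
  have hpos : ∀ᵐ x ∂μ, 0 < f x := by
    filter_upwards [Measure.rnDeriv_pos hμν, hμν.ae_le (Measure.rnDeriv_lt_top μ ν)]
      with x h1 h2
    exact ENNReal.toReal_pos h1.ne' h2.ne
  set g : X → ℝ := fun x => f x ^ (-(1/2) : ℝ) with hgdef
  have hsm : ∀ x, f x • g x = Real.sqrt (f x) := fun x => by
    rcases (hf0 x).eq_or_lt with h | h
    · simp [hgdef, ← h, Real.zero_rpow (by norm_num : (-(1/2) : ℝ) ≠ 0)]
    · rw [smul_eq_mul, hgdef, Real.sqrt_eq_rpow]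
      nth_rewrite 1 [← Real.rpow_one (f x)]
      rw [← Real.rpow_add h]
      norm_num
  have hsmint : Integrable (fun x => f x • g x) ν := by
    refine Integrable.congr hsqint (ae_of_all _ fun x => (hsm x).symm)
  have hgint : Integrable g μ := (integrable_rnDeriv_smul_iff hμν).mp hsmint
  have hgμ : ∫ x, g x ∂μ = ∫ x, Real.sqrt (f x) ∂ν := by
    rw [← integral_rnDeriv_smul hμν (f := g)]
    exact integral_congr_ae (ae_of_all _ fun x => hsm x)
  have hae_g : ∀ᵐ x ∂μ, g x = Real.exp ((-(1/2)) * Real.log (f x)) := by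
    filter_upwards [hpos] with x hx
    show f x ^ (-(1/2) : ℝ) = _
    rw [Real.rpow_def_of_pos hx, mul_comm]
  have hjen : Real.exp (-(1/2) * KL) ≤ ∫ x, Real.sqrt (f x) ∂ν := by
    have hint1 : Integrable (fun x => (-(1/2)) * Real.log (f x)) μ := hlog.const_mul _
    have hint2 : Integrable (fun x => Real.exp ((-(1/2)) * Real.log (f x))) μ :=
      hgint.congr hae_g
    have := convexOn_exp.map_integral_le Real.continuous_exp.continuousOn isClosed_univ
      (ae_of_all _ fun x => Set.mem_univ _) hint1 hint2
    rw [integral_const_mul] at this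
    calc Real.exp (-(1/2) * KL) ≤ ∫ x, Real.exp ((-(1/2)) * Real.log (f x)) ∂μ := this
      _ = ∫ x, g x ∂μ := integral_congr_ae (hae_g.mono fun x hx => hx.symm)
      _ = _ := hgμ
  -- Cauchy–Schwarz
  have h22 : Real.HolderConjugate 2 2 := ⟨by norm_num, by norm_num, by norm_num⟩
  have hM0 : 0 ≤ M := integral_nonneg fun x => le_max_of_le_right zero_le_one
  have hmemmin : MemLp (fun x => Real.sqrt (min (f x) 1)) (ENNReal.ofReal 2) ν := by
    rw [show ENNReal.ofReal 2 = 2 by norm_num]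
    refine (memLp_two_iff_integrable_sq
      ((Real.continuous_sqrt.measurable.comp (hfm.min measurable_const)).aestronglyMeasurable)).mpr
      (hmin.congr (ae_of_all _ fun x => ?_))
    show f x ⊓ 1 = Real.sqrt (f x ⊓ 1) ^ 2
    exact (Real.sq_sqrt (le_min (hf0 x) zero_le_one)).symm
  have hmemmax : MemLp (fun x => Real.sqrt (max (f x) 1)) (ENNReal.ofReal 2) ν := by
    rw [show ENNReal.ofReal 2 = 2 by norm_num]
    refine (memLp_two_iff_integrable_sq
      ((Real.continuous_sqrt.measurable.comp (hfm.max measurable_const)).aestronglyMeasurable)).mpr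
      (hmax.congr (ae_of_all _ fun x => ?_))
    show f x ⊔ 1 = Real.sqrt (f x ⊔ 1) ^ 2
    exact (Real.sq_sqrt (le_max_of_le_right zero_le_one)).symm
  have hcs := integral_mul_le_Lp_mul_Lq_of_nonneg h22
    (ae_of_all _ fun x => Real.sqrt_nonneg (min (f x) 1))
    (ae_of_all _ fun x => Real.sqrt_nonneg (max (f x) 1)) hmemmin hmemmax
  have hprod : ∀ x, Real.sqrt (min (f x) 1) * Real.sqrt (max (f x) 1) = Real.sqrt (f x) := by
    intro x
    rw [← Real.sqrt_mul (le_min (hf0 x) zero_le_one), min_mul_max, mul_one]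
  have hcs' : ∫ x, Real.sqrt (f x) ∂ν ≤ Real.sqrt m * Real.sqrt M := by
    have hl : ∫ x, Real.sqrt (min (f x) 1) * Real.sqrt (max (f x) 1) ∂ν
        = ∫ x, Real.sqrt (f x) ∂ν := integral_congr_ae (ae_of_all _ hprod)
    have hrm : ∫ x, Real.sqrt (min (f x) 1) ^ (2 : ℝ) ∂ν = m := by
      rw [hmdef]
      refine integral_congr_ae (ae_of_all _ fun x => ?_)
      show Real.sqrt (f x ⊓ 1) ^ (2:ℝ) = f x ⊓ 1
      rw [show (2:ℝ) = ((2:ℕ):ℝ) by norm_num, Real.rpow_natCast,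
        Real.sq_sqrt (le_min (hf0 x) zero_le_one)]
    have hrM : ∫ x, Real.sqrt (max (f x) 1) ^ (2 : ℝ) ∂ν = M := by
      rw [hMdef]
      refine integral_congr_ae (ae_of_all _ fun x => ?_)
      show Real.sqrt (f x ⊔ 1) ^ (2:ℝ) = f x ⊔ 1
      rw [show (2:ℝ) = ((2:ℕ):ℝ) by norm_num, Real.rpow_natCast,
        Real.sq_sqrt (le_max_of_le_right zero_le_one)]
    rw [hl, hrm, hrM] at hcs
    calc ∫ x, Real.sqrt (f x) ∂ν ≤ m ^ (1/2 : ℝ) * M ^ (1/2 : ℝ) := hcs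
      _ = Real.sqrt m * Real.sqrt M := by rw [← Real.sqrt_eq_rpow, ← Real.sqrt_eq_rpow]
  -- combine
  have hA0 : 0 ≤ ∫ x, Real.sqrt (f x) ∂ν := integral_nonneg fun x => Real.sqrt_nonneg _
  have hexpKL : Real.exp (-KL) ≤ m * M := by
    have h1 : Real.exp (-KL) = Real.exp (-(1/2) * KL) * Real.exp (-(1/2) * KL) := by
      rw [← Real.exp_add]; ring_nf
    have h2 : Real.sqrt m * Real.sqrt m = m := Real.mul_self_sqrt hm0
    have h3 : Real.sqrt M * Real.sqrt M = M := Real.mul_self_sqrt hM0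
    nlinarith [Real.exp_pos (-(1/2) * KL), Real.sqrt_nonneg m, Real.sqrt_nonneg M]
  have hMe : M = 2 - m := by linarith
  rw [hMe] at hexpKL
  have h1m : Real.exp (-KL) ≤ 1 - (1 - m)^2 := by nlinarith
  constructor
  · nlinarith [sq_nonneg (1 - m)]
  · have hsq : (1 - m) ≤ Real.sqrt (1 - Real.exp (-KL)) := by
      rw [Real.le_sqrt (by linarith) (by nlinarith [sq_nonneg (1-m)])]
      nlinarith
    rw [habs, hMe]
    linarith


lemma aux_mmd {X : Type*} [MeasurableSpace X]
    {H : Type*} [NormedAddCommGroup H] [InnerProductSpace ℝ H] [CompleteSpace H]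
    (μ ν : Measure X) [IsProbabilityMeasure μ] [IsProbabilityMeasure ν] (hμν : μ ≪ ν)
    (φ : X → H) (hi0 : Integrable φ μ) (hi1 : Integrable φ ν)
    (C : ℝ) (hC0 : 0 ≤ C) (hC : ∀ x, ‖φ x‖ ≤ C) :
    ‖(∫ x, φ x ∂μ) - ∫ x, φ x ∂ν‖ ≤ C * ∫ x, |(μ.rnDeriv ν x).toReal - 1| ∂ν := by
  set f : X → ℝ := fun x => (μ.rnDeriv ν x).toReal with hfdef
  have hfint : Integrable f ν := Measure.integrable_toReal_rnDeriv
  have hsm : Integrable (fun x => f x • φ x) ν := (integrable_rnDeriv_smul_iff hμν).mpr hi0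
  have habsint : Integrable (fun x => |f x - 1|) ν := (hfint.sub (integrable_const 1)).abs
  have h1 : (∫ x, φ x ∂μ) - ∫ x, φ x ∂ν = ∫ x, (f x • φ x - φ x) ∂ν := by
    rw [integral_sub hsm hi1, integral_rnDeriv_smul hμν]
  rw [h1]
  calc ‖∫ x, (f x • φ x - φ x) ∂ν‖ ≤ ∫ x, ‖f x • φ x - φ x‖ ∂ν :=
        norm_integral_le_integral_norm _
    _ ≤ ∫ x, |f x - 1| * C ∂ν := by
        refine integral_mono (hsm.sub hi1).norm (habsint.mul_const C)
          (fun x => ?_)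
        have : f x • φ x - φ x = (f x - 1) • φ x := by rw [sub_smul, one_smul]
        rw [this, norm_smul, Real.norm_eq_abs]
        exact mul_le_mul_of_nonneg_left (hC x) (abs_nonneg _)
    _ = C * ∫ x, |f x - 1| ∂ν := by rw [integral_mul_const, mul_comm]

/-- **Expected MMD bound via KL.** For probability kernels `Pi0(·|z)`, `Pi1(·|z)` into
`X`, a bounded kernel `k` on `X` with `sup_x k(x,x) ≤ K` and feature map `φ`, and a
law `P⁰` on `z = (w,y)`, with `Pi0(·|z) ≪ Pi1(·|z)` a.e., the expected MMD is bounded by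
`2√K · √(1 − exp(−E KL(Pi0(·|z) ‖ Pi1(·|z))))`. -/
theorem stmt9
    {X Z : Type*} [MeasurableSpace X] [MeasurableSpace Z]
    {H : Type*} [NormedAddCommGroup H] [InnerProductSpace ℝ H] [CompleteSpace H]
    (k : X → X → ℝ) (φ : X → H)
    (hk : ∀ x x', k x x' = inner ℝ (φ x) (φ x'))
    (K : ℝ) (hK : ∀ x, k x x ≤ K)
    (Pi0 Pi1 : Z → Measure X)
    [∀ z, IsProbabilityMeasure (Pi0 z)] [∀ z, IsProbabilityMeasure (Pi1 z)]
    (P0 : Measure Z) [IsProbabilityMeasure P0]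
    (hac : ∀ᵐ z ∂P0, Pi0 z ≪ Pi1 z)
    (hint0 : ∀ z, Integrable φ (Pi0 z)) (hint1 : ∀ z, Integrable φ (Pi1 z))
    (hmmd : Integrable (fun z => ‖(∫ x, φ x ∂(Pi0 z)) - ∫ x, φ x ∂(Pi1 z)‖) P0)
    (hklz : ∀ z, Integrable (fun x => Real.log ((Pi0 z).rnDeriv (Pi1 z) x).toReal) (Pi0 z))
    (hkl : Integrable
      (fun z => ∫ x, Real.log ((Pi0 z).rnDeriv (Pi1 z) x).toReal ∂(Pi0 z)) P0) :
    ∫ z, ‖(∫ x, φ x ∂(Pi0 z)) - ∫ x, φ x ∂(Pi1 z)‖ ∂P0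
      ≤ 2 * Real.sqrt K *
        Real.sqrt (1 - Real.exp
          (-(∫ z, (∫ x, Real.log ((Pi0 z).rnDeriv (Pi1 z) x).toReal ∂(Pi0 z)) ∂P0))) := by
  set KLz : Z → ℝ := fun z => ∫ x, Real.log ((Pi0 z).rnDeriv (Pi1 z) x).toReal ∂(Pi0 z)
    with hKLzdef
  have hsqK : (0:ℝ) ≤ Real.sqrt K := Real.sqrt_nonneg K
  have hφ : ∀ x, ‖φ x‖ ≤ Real.sqrt K := by
    intro x
    rw [show ‖φ x‖ = Real.sqrt (‖φ x‖ ^ 2) from (Real.sqrt_sq (norm_nonneg _)).symm]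
    apply Real.sqrt_le_sqrt
    rw [← real_inner_self_eq_norm_sq, ← hk]
    exact hK x
  have hptwise : ∀ᵐ z ∂P0, ‖(∫ x, φ x ∂(Pi0 z)) - ∫ x, φ x ∂(Pi1 z)‖
      ≤ 2 * Real.sqrt K * Real.sqrt (1 - Real.exp (-(KLz z)))
      ∧ Real.exp (-(KLz z)) ≤ 1 := by
    filter_upwards [hac] with z hz
    obtain ⟨h1, h2⟩ := aux_bh (Pi0 z) (Pi1 z) hz (hklz z)
    refine ⟨?_, h1⟩
    calc ‖(∫ x, φ x ∂(Pi0 z)) - ∫ x, φ x ∂(Pi1 z)‖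
        ≤ Real.sqrt K * ∫ x, |((Pi0 z).rnDeriv (Pi1 z) x).toReal - 1| ∂(Pi1 z) :=
          aux_mmd _ _ hz φ (hint0 z) (hint1 z) _ hsqK hφ
      _ ≤ Real.sqrt K * (2 * Real.sqrt (1 - Real.exp (-(KLz z)))) :=
          mul_le_mul_of_nonneg_left h2 hsqK
      _ = 2 * Real.sqrt K * Real.sqrt (1 - Real.exp (-(KLz z))) := by ring
  have hKLm : AEStronglyMeasurable KLz P0 := hkl.aestronglyMeasurable
  have hexp_m : AEStronglyMeasurable (fun z => Real.exp (-(KLz z))) P0 :=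
    (Real.continuous_exp.comp continuous_neg).comp_aestronglyMeasurable hKLm
  have hu_m : AEStronglyMeasurable (fun z => Real.sqrt (1 - Real.exp (-(KLz z)))) P0 :=
    (Real.continuous_sqrt.comp
      ((continuous_const.sub (Real.continuous_exp.comp continuous_neg)))).comp_aestronglyMeasurable
      hKLm
  have hub : ∀ᵐ z ∂P0, Real.exp (-(KLz z)) ≤ 1 := hptwise.mono fun z h => h.2
  have huint : Integrable (fun z => Real.exp (-(KLz z))) P0 := by
    refine Integrable.mono' (integrable_const 1) hexp_m (hub.mono fun z h => ?_)
    rw [Real.norm_eq_abs, abs_of_nonneg (Real.exp_pos _).le]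
    exact h
  have hsint : Integrable (fun z => Real.sqrt (1 - Real.exp (-(KLz z)))) P0 := by
    refine Integrable.mono' (integrable_const 1) hu_m (ae_of_all _ fun z => ?_)
    rw [Real.norm_eq_abs, abs_of_nonneg (Real.sqrt_nonneg _)]
    calc Real.sqrt (1 - Real.exp (-(KLz z))) ≤ Real.sqrt 1 :=
          Real.sqrt_le_sqrt (by nlinarith [Real.exp_pos (-(KLz z))])
      _ = 1 := Real.sqrt_one
  have step1 : ∫ z, ‖(∫ x, φ x ∂(Pi0 z)) - ∫ x, φ x ∂(Pi1 z)‖ ∂P0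
      ≤ 2 * Real.sqrt K * ∫ z, Real.sqrt (1 - Real.exp (-(KLz z))) ∂P0 := by
    have := integral_mono_ae hmmd (hsint.const_mul (2 * Real.sqrt K))
      (hptwise.mono fun z h => h.1)
    simpa [integral_const_mul] using this
  have hu_int : Integrable (fun z => 1 - Real.exp (-(KLz z))) P0 :=
    (integrable_const 1).sub huint
  have hjs : ∫ z, Real.sqrt (1 - Real.exp (-(KLz z))) ∂P0
      ≤ Real.sqrt (∫ z, (1 - Real.exp (-(KLz z))) ∂P0) := by
    have hconc : ConcaveOn ℝ (Set.Ici 0) (Real.sqrt) := Real.strictConcaveOn_sqrt.concaveOn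
    exact hconc.le_map_integral Real.continuous_sqrt.continuousOn isClosed_Ici
      (hub.mono fun z h => by simp only [Set.mem_Ici]; linarith) hu_int hsint
  have hje : Real.exp (-(∫ z, KLz z ∂P0)) ≤ ∫ z, Real.exp (-(KLz z)) ∂P0 := by
    have := convexOn_exp.map_integral_le Real.continuous_exp.continuousOn isClosed_univ
      (ae_of_all _ fun z => Set.mem_univ _) hkl.neg huint
    simp only [Pi.neg_apply] at this
    rwa [integral_neg] at this
  have hfinal : ∫ z, (1 - Real.exp (-(KLz z))) ∂P0
      ≤ 1 - Real.exp (-(∫ z, KLz z ∂P0)) := by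
    rw [integral_sub (integrable_const 1) huint]
    simp only [integral_const, measure_univ, ENNReal.toReal_one, probReal_univ, smul_eq_mul, one_mul]
    linarith
  calc ∫ z, ‖(∫ x, φ x ∂(Pi0 z)) - ∫ x, φ x ∂(Pi1 z)‖ ∂P0
      ≤ 2 * Real.sqrt K * ∫ z, Real.sqrt (1 - Real.exp (-(KLz z))) ∂P0 := step1
    _ ≤ 2 * Real.sqrt K * Real.sqrt (∫ z, (1 - Real.exp (-(KLz z))) ∂P0) :=
        mul_le_mul_of_nonneg_left hjs (by positivity)
    _ ≤ 2 * Real.sqrt K * Real.sqrt (1 - Real.exp (-(∫ z, KLz z ∂P0))) :=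
        mul_le_mul_of_nonneg_left (Real.sqrt_le_sqrt hfinal) (by positivity)
end

section
/- Let X, W, Y be random variables with W = X + N (or X = W + N) where N is independent noise with law F_N, and Y arbitrary. Let k = k_X ⊗ k_Y be a product kernel with k_X translation invariant, k_X(x,x') = ψ(x−x'), 0 ≤ k_X ≤ κ_X, 0 ≤ k_Y ≤ κ_Y. Then MMD_k(Law(X,Y), Law(W,Y)) ≤ √2 · κ_Y^{1/2} · κ_X^{1/4} · √(MMD_{k_X}(F_N, δ_0)). -/
open MeasureTheory


lemma aux_map_eval {Ω : Type*} [MeasurableSpace Ω] (P : Measure Ω) [IsProbabilityMeasure P]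
    {m : ℕ} (i : Fin m) :
    Measure.map (fun ω : Fin m → Ω => ω i) (Measure.pi fun _ => P) = P := by
  classical
  ext s hs
  rw [Measure.map_apply (measurable_pi_apply i) hs]
  have hpre : (fun ω : Fin m → Ω => ω i) ⁻¹' s
      = Set.pi Set.univ (Function.update (fun _ => Set.univ) i s) := by
    ext ω
    simp only [Set.mem_preimage, Set.mem_univ_pi, Function.update_apply]
    constructor
    · intro h j
      by_cases hj : j = i
      · subst hj; simpa using h
      · simp [hj]
    · intro h
      have := h i
      simpa using this
  rw [hpre, Measure.pi_pi]
  rw [Finset.prod_eq_single i]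
  · simp
  · intro j _ hj
    simp [Function.update_apply, hj]
  · simp

lemma aux_map_pair {Ω : Type*} [MeasurableSpace Ω] (P : Measure Ω) [IsProbabilityMeasure P]
    {m : ℕ} {i j : Fin m} (hij : i ≠ j) :
    Measure.map (fun ω : Fin m → Ω => (ω i, ω j)) (Measure.pi fun _ => P) = P.prod P := by
  classical
  refine (Measure.prod_eq fun s t hs ht => ?_).symm
  rw [Measure.map_apply ((measurable_pi_apply i).prodMk (measurable_pi_apply j)) (hs.prod ht)]
  have hpre : (fun ω : Fin m → Ω => (ω i, ω j)) ⁻¹' (s ×ˢ t)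
      = Set.pi Set.univ (Function.update (Function.update (fun _ => Set.univ) i s) j t) := by
    ext ω
    simp only [Set.mem_preimage, Set.mem_prod, Set.mem_univ_pi, Function.update_apply]
    constructor
    · rintro ⟨h1, h2⟩ k
      by_cases hk : k = j
      · subst hk; simp [h2]
      · by_cases hk' : k = i
        · subst hk'; simp [hk, h1]
        · simp [hk, hk']
    · intro h
      constructor
      · have := h i
        rw [if_neg hij] at this
        simpa using this
      · have := h j
        simpa using this
  rw [hpre, Measure.pi_pi]
  rw [← Finset.mul_prod_erase Finset.univ _ (Finset.mem_univ j)]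
  have hi : i ∈ Finset.univ.erase j := Finset.mem_erase.mpr ⟨hij, Finset.mem_univ i⟩
  rw [← Finset.mul_prod_erase _ _ hi]
  have h1 : P (Function.update (Function.update (fun _ => Set.univ) i s) j t j) = P t := by
    simp
  have h2 : P (Function.update (Function.update (fun _ => Set.univ) i s) j t i) = P s := by
    simp [Function.update_apply, hij]
  rw [h1, h2]
  have h3 : ∀ k ∈ (Finset.univ.erase j).erase i,
      P (Function.update (Function.update (fun _ => Set.univ) i s) j t k) = 1 := by
    intro k hk
    obtain ⟨hki, hkj⟩ : k ≠ i ∧ k ≠ j := by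
      have := Finset.mem_erase.mp hk
      exact ⟨this.1, (Finset.mem_erase.mp this.2).1⟩
    simp [Function.update_apply, hki, hkj]
  rw [Finset.prod_congr rfl h3]
  simp [mul_comm]

lemma aux_Q_nonneg {E : Type*} [AddCommGroup E] [MeasurableSpace E]
    {H : Type*} [NormedAddCommGroup H] [InnerProductSpace ℝ H]
    {Ω : Type*} [MeasurableSpace Ω] (P : Measure Ω) [IsProbabilityMeasure P]
    (ψ : E → ℝ) (κX c : ℝ) (hc : 0 < c) (φ : E → H)
    (hφ : ∀ x x', (inner ℝ (φ x) (φ x') : ℝ) = ψ (x - x') * c)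
    (hψ0 : ψ 0 = κX) (hψb : ∀ x, ψ x ≤ κX)
    (N : Ω → E) (hNmeas : Measurable N)
    (hψN : Integrable (fun ω => ψ (N ω)) P)
    (hψNN : Integrable (fun p : E × E => ψ (p.1 - p.2)) ((P.map N).prod (P.map N)))
    (t : ℝ) :
    0 ≤ (∫ p : E × E, ψ (p.1 - p.2) ∂((P.map N).prod (P.map N)))
        - 2*t*(∫ ω, ψ (N ω) ∂P) + t^2*κX := by
  classical
  haveI : IsProbabilityMeasure (P.map N) := Measure.isProbabilityMeasure_map hNmeas.aemeasurable
  set I₂ : ℝ := ∫ p : E × E, ψ (p.1 - p.2) ∂((P.map N).prod (P.map N)) with hI₂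
  set I₁ : ℝ := ∫ ω, ψ (N ω) ∂P with hI₁
  have hI₂le : I₂ ≤ κX := by
    calc I₂ ≤ ∫ _p : E × E, κX ∂((P.map N).prod (P.map N)) :=
          integral_mono hψNN (integrable_const κX) (fun p => hψb _)
      _ = κX := by simp
  -- the per-m inequality
  have step : ∀ m : ℕ, 0 < m →
      0 ≤ κX/m + I₂ - I₂/m - 2*t*I₁ + t^2*κX := by
    intro m hm
    have hmR : (0:ℝ) < m := by exact_mod_cast hm
    set ν : Measure (Fin m → Ω) := Measure.pi (fun _ => P) with hν
    haveI : IsProbabilityMeasure ν := by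
      rw [hν]; infer_instance
    -- pushforward facts
    have heval : ∀ i : Fin m,
        Measure.map (fun ω : Fin m → Ω => ω i) ν = P := fun i => aux_map_eval P i
    have hpair : ∀ i j : Fin m, i ≠ j →
        Measure.map (fun ω : Fin m → Ω => (N (ω i), N (ω j))) ν
          = (P.map N).prod (P.map N) := by
      intro i j hij
      have hcomp : (fun ω : Fin m → Ω => (N (ω i), N (ω j)))
          = (Prod.map N N) ∘ (fun ω : Fin m → Ω => (ω i, ω j)) := rfl
      rw [hcomp, ← Measure.map_map (hNmeas.prodMap hNmeas)
          ((measurable_pi_apply i).prodMk (measurable_pi_apply j)),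
        aux_map_pair P hij, ← Measure.map_prod_map _ _ hNmeas hNmeas]
    -- integrability and integral values of single terms
    have hInt1 : ∀ i : Fin m, Integrable (fun ω : Fin m → Ω => ψ (N (ω i))) ν := by
      intro i
      exact (integrable_map_measure (f := fun ω : Fin m → Ω => ω i)
          (g := fun ω : Ω => ψ (N ω))
          (by rw [heval i]; exact hψN.aestronglyMeasurable)
          (measurable_pi_apply i).aemeasurable).mp (by rw [heval i]; exact hψN)
    have hVal1 : ∀ i : Fin m, ∫ ω, ψ (N (ω i)) ∂ν = I₁ := by
      intro i
      have := integral_map (φ := fun ω : Fin m → Ω => ω i) (μ := ν)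
          (f := fun ω : Ω => ψ (N ω))
          (measurable_pi_apply i).aemeasurable
          (by rw [heval i]; exact hψN.aestronglyMeasurable)
      rw [heval i] at this
      exact this.symm
    -- integrability and integral values of pair terms
    have hInt2 : ∀ i j : Fin m, Integrable (fun ω : Fin m → Ω => ψ (N (ω i) - N (ω j))) ν := by
      intro i j
      by_cases hij : i = j
      · subst hij
        have : (fun ω : Fin m → Ω => ψ (N (ω i) - N (ω i))) = fun _ => κX := by
          funext ω; rw [sub_self, hψ0]
        rw [this]; exact integrable_const _
      · exact (integrable_map_measure (f := fun ω : Fin m → Ω => (N (ω i), N (ω j)))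
            (g := fun p : E × E => ψ (p.1 - p.2))
            (by rw [hpair i j hij]; exact hψNN.aestronglyMeasurable)
            ((hNmeas.comp (measurable_pi_apply i)).prodMk
              (hNmeas.comp (measurable_pi_apply j))).aemeasurable).mp
            (by rw [hpair i j hij]; exact hψNN)
    have hVal2 : ∀ i j : Fin m, ∫ ω, ψ (N (ω i) - N (ω j)) ∂ν = if i = j then κX else I₂ := by
      intro i j
      by_cases hij : i = j
      · subst hij
        have : (fun ω : Fin m → Ω => ψ (N (ω i) - N (ω i))) = fun _ => κX := by
          funext ω; rw [sub_self, hψ0]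
        rw [if_pos rfl, this]; simp
      · rw [if_neg hij]
        have := integral_map (φ := fun ω : Fin m → Ω => (N (ω i), N (ω j))) (μ := ν)
            (f := fun p : E × E => ψ (p.1 - p.2))
            ((hNmeas.comp (measurable_pi_apply i)).prodMk
              (hNmeas.comp (measurable_pi_apply j))).aemeasurable
            (by rw [hpair i j hij]; exact hψNN.aestronglyMeasurable)
        rw [hpair i j hij] at this
        exact this.symm
    -- pointwise nonnegativity
    set F : (Fin m → Ω) → ℝ := fun ω =>
      (∑ i : Fin m, ∑ j : Fin m, ψ (N (ω i) - N (ω j))) * ((m:ℝ)⁻¹*(m:ℝ)⁻¹)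
        - 2*t*(m:ℝ)⁻¹*(∑ i : Fin m, ψ (N (ω i))) + t^2*κX with hF
    have hpt : ∀ ω, 0 ≤ F ω := by
      intro ω
      set v : H := (∑ i : Fin m, (m:ℝ)⁻¹ • φ (N (ω i))) - t • φ 0 with hv
      have hswap : (∑ i : Fin m, ∑ j : Fin m, ψ (N (ω j) - N (ω i)))
          = ∑ i : Fin m, ∑ j : Fin m, ψ (N (ω i) - N (ω j)) := Finset.sum_comm
      have key : ‖v‖^2 = c * F ω := by
        rw [hv, hF, norm_sub_sq_real]
        rw [← real_inner_self_eq_norm_sq, ← real_inner_self_eq_norm_sq]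
        simp only [sum_inner, inner_sum, real_inner_smul_left, real_inner_smul_right, hφ,
          sub_zero, hψ0]
        simp only [← Finset.mul_sum, ← Finset.sum_mul]
        linear_combination ((m:ℝ)⁻¹ * (m:ℝ)⁻¹ * c) * hswap
      have h2 : 0 ≤ c * F ω := key ▸ sq_nonneg ‖v‖
      nlinarith [h2, hc]
    have hint : 0 ≤ ∫ ω, F ω ∂ν := integral_nonneg hpt
    -- compute the integral
    have hIntS : Integrable (fun ω : Fin m → Ω =>
        ∑ i : Fin m, ∑ j : Fin m, ψ (N (ω i) - N (ω j))) ν :=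
      integrable_finset_sum _ (fun i _ => integrable_finset_sum _ (fun j _ => hInt2 i j))
    have hIntL : Integrable (fun ω : Fin m → Ω => ∑ i : Fin m, ψ (N (ω i))) ν :=
      integrable_finset_sum _ (fun i _ => hInt1 i)
    have hScomp : ∫ ω, (∑ i : Fin m, ∑ j : Fin m, ψ (N (ω i) - N (ω j))) ∂ν
        = m*κX + (m*((m:ℝ)-1))*I₂ := by
      rw [integral_finset_sum _ (fun i _ => integrable_finset_sum _ (fun j _ => hInt2 i j))]
      have hrow : ∀ i : Fin m, ∫ ω, (∑ j : Fin m, ψ (N (ω i) - N (ω j))) ∂ν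
          = κX + ((m:ℝ)-1)*I₂ := by
        intro i
        rw [integral_finset_sum _ (fun j _ => hInt2 i j)]
        have h1 : ∀ j : Fin m, ∫ ω, ψ (N (ω i) - N (ω j)) ∂ν
            = I₂ + (if j = i then κX - I₂ else 0) := by
          intro j
          rw [hVal2 i j]
          by_cases h : i = j
          · subst h; simp
          · simp [h, Ne.symm h]
        rw [Finset.sum_congr rfl (fun j _ => h1 j), Finset.sum_add_distrib, Finset.sum_const,
          Finset.sum_ite_eq' Finset.univ i (fun _ => κX - I₂)]
        simp only [Finset.card_univ, Fintype.card_fin, nsmul_eq_mul, Finset.mem_univ, if_true]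
        ring
      rw [Finset.sum_congr rfl (fun i _ => hrow i), Finset.sum_const]
      simp only [Finset.card_univ, Fintype.card_fin, nsmul_eq_mul]
      ring
    have hLcomp : ∫ ω, (∑ i : Fin m, ψ (N (ω i))) ∂ν = m*I₁ := by
      rw [integral_finset_sum _ (fun i _ => hInt1 i)]
      rw [Finset.sum_congr rfl (fun i _ => hVal1 i), Finset.sum_const]
      simp only [Finset.card_univ, Fintype.card_fin, nsmul_eq_mul]
    have hA : Integrable (fun ω : Fin m → Ω =>
        (∑ i : Fin m, ∑ j : Fin m, ψ (N (ω i) - N (ω j))) * ((m:ℝ)⁻¹*(m:ℝ)⁻¹)) ν :=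
      hIntS.mul_const _
    have hB : Integrable (fun ω : Fin m → Ω =>
        2*t*(m:ℝ)⁻¹*(∑ i : Fin m, ψ (N (ω i)))) ν := hIntL.const_mul _
    have hAB : Integrable (fun ω : Fin m → Ω =>
        (∑ i : Fin m, ∑ j : Fin m, ψ (N (ω i) - N (ω j))) * ((m:ℝ)⁻¹*(m:ℝ)⁻¹)
          - 2*t*(m:ℝ)⁻¹*(∑ i : Fin m, ψ (N (ω i)))) ν := hA.sub hB
    have hFval : ∫ ω, F ω ∂ν
        = (m*κX + (m*((m:ℝ)-1))*I₂) * ((m:ℝ)⁻¹*(m:ℝ)⁻¹) - 2*t*(m:ℝ)⁻¹*(m*I₁) + t^2*κX := by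
      simp only [hF]
      rw [integral_add hAB (integrable_const _), integral_sub hA hB,
        integral_mul_const, integral_const_mul, hScomp, hLcomp]
      simp
    rw [hFval] at hint
    have hm0 : (m:ℝ) ≠ 0 := ne_of_gt hmR
    have heq : (m*κX + (m*((m:ℝ)-1))*I₂) * ((m:ℝ)⁻¹*(m:ℝ)⁻¹) - 2*t*(m:ℝ)⁻¹*(m*I₁) + t^2*κX
        = κX/m + I₂ - I₂/m - 2*t*I₁ + t^2*κX := by
      field_simp
      ring
    linarith [heq ▸ hint]
  -- take the limit m → ∞
  by_contra hcon
  push_neg at hcon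
  set T : ℝ := I₂ - 2*t*I₁ + t^2*κX with hT
  obtain ⟨m, hmgt⟩ := exists_nat_gt ((κX - I₂)/(-T))
  have hm0 : 0 < m := by
    by_contra h
    push_neg at h
    interval_cases m
    · simp only [Nat.cast_zero] at hmgt
      have : 0 ≤ (κX - I₂)/(-T) := div_nonneg (by linarith) (by linarith)
      linarith
  have hstep := step m hm0
  have hmR : (0:ℝ) < m := by exact_mod_cast hm0
  have h3 : (κX - I₂)/(m:ℝ) < -T := by
    rw [div_lt_iff₀ hmR]
    rw [div_lt_iff₀ (by linarith : (0:ℝ) < -T)] at hmgt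
    linarith
  have h4 : κX/(m:ℝ) - I₂/(m:ℝ) = (κX - I₂)/(m:ℝ) := (sub_div _ _ _).symm
  linarith

/-- **No-pseudo-sampling joint MMD bound.** Under the additive-noise model `W = X + N`
(equivalently, `X = W + N` by symmetry of the roles), with a product kernel
`k = k_X ⊗ k_Y`, `k_X` translation invariant (`k_X(x,x') = ψ(x−x')`, `0 ≤ ψ ≤ κ_X`,
`ψ(0) = κ_X`), `0 ≤ k_Y ≤ κ_Y`, and joint feature map `Φ`, the MMD between the joint
laws of `(X,Y)` and `(W,Y)` satisfies
`MMD ≤ √2 · κ_Y^{1/2} · κ_X^{1/4} · √(MMD_{k_X}(F_N, δ₀))`, where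
`MMD_{k_X}(F_N, δ₀) = √(E ψ(N−N') + κ_X − 2 E ψ(N))` with `N, N'` i.i.d. `F_N`. -/
theorem stmt12
    {E 𝒴 : Type*} [AddCommGroup E] [MeasurableSpace E] [MeasurableSpace 𝒴]
    {H : Type*} [NormedAddCommGroup H] [InnerProductSpace ℝ H] [CompleteSpace H]
    {Ω : Type*} [MeasurableSpace Ω] (P : Measure Ω) [IsProbabilityMeasure P]
    (ψ : E → ℝ) (kY : 𝒴 → 𝒴 → ℝ) (κX κY : ℝ)
    (Φ : E → 𝒴 → H)
    (hΦ : ∀ x y x' y', (inner ℝ (Φ x y) (Φ x' y') : ℝ) = ψ (x - x') * kY y y')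
    (hψ0 : ψ 0 = κX)
    (hψnn : ∀ x, 0 ≤ ψ x) (hψb : ∀ x, ψ x ≤ κX)
    (hkYnn : ∀ y y', 0 ≤ kY y y') (hkYb : ∀ y y', kY y y' ≤ κY)
    (X N : Ω → E) (Y : Ω → 𝒴) (W : Ω → E)
    (hW : ∀ ω, W ω = X ω + N ω)
    (hNmeas : Measurable N)
    (hXY : Integrable (fun ω => Φ (X ω) (Y ω)) P)
    (hWY : Integrable (fun ω => Φ (W ω) (Y ω)) P)
    (hψN : Integrable (fun ω => ψ (N ω)) P)
    (hψNN : Integrable (fun p : E × E => ψ (p.1 - p.2)) ((P.map N).prod (P.map N))) :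
    ‖(∫ ω, Φ (X ω) (Y ω) ∂P) - ∫ ω, Φ (W ω) (Y ω) ∂P‖
      ≤ Real.sqrt 2 * Real.sqrt κY * Real.sqrt (Real.sqrt κX) *
        Real.sqrt (Real.sqrt
          ((∫ p : E × E, ψ (p.1 - p.2) ∂((P.map N).prod (P.map N))) + κX
            - 2 * ∫ ω, ψ (N ω) ∂P)) := by
  by_cases hzero : ∀ x y, Φ x y = 0
  · simp only [hzero, integral_zero, sub_zero, norm_zero]
    positivity
  · push_neg at hzero
    obtain ⟨x₀, y₀, h₀⟩ := hzero
    set c := kY y₀ y₀ with hcdef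
    have hnorm : ‖Φ x₀ y₀‖^2 = κX * c := by
      rw [← real_inner_self_eq_norm_sq, hΦ, sub_self, hψ0]
    have hposKc : 0 < κX * c := by
      rw [← hnorm]
      exact pow_pos (norm_pos_iff.mpr h₀) 2
    have hκX0 : 0 ≤ κX := hψ0 ▸ hψnn 0
    have hc0 : 0 ≤ c := hkYnn _ _
    have hκX : 0 < κX := by
      by_contra h
      push_neg at h
      have : κX = 0 := le_antisymm h hκX0
      rw [this, zero_mul] at hposKc
      exact lt_irrefl 0 hposKc
    have hc : 0 < c := by
      by_contra h
      push_neg at h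
      have : c = 0 := le_antisymm h hc0
      rw [this, mul_zero] at hposKc
      exact lt_irrefl 0 hposKc
    have hκY0 : 0 ≤ κY := le_trans hc0 (hkYb y₀ y₀)
    set I₂ : ℝ := ∫ p : E × E, ψ (p.1 - p.2) ∂((P.map N).prod (P.map N)) with hI₂
    set I₁ : ℝ := ∫ ω, ψ (N ω) ∂P with hI₁
    set b : ℝ := I₂ + κX - 2 * I₁ with hb
    -- bounds on I₁
    have hI₁nn : 0 ≤ I₁ := integral_nonneg fun ω => hψnn _
    have hI₁le : I₁ ≤ κX := by
      calc I₁ ≤ ∫ _ω, κX ∂P := integral_mono hψN (integrable_const κX) (fun ω => hψb _)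
        _ = κX := by simp
    -- the key positivity fact
    have hcrux := aux_Q_nonneg P ψ κX c hc (fun x => Φ x y₀)
      (fun x x' => hΦ x y₀ x' y₀) hψ0 hψb N hNmeas hψN hψNN (I₁/κX)
    have heq : I₂ - 2*(I₁/κX)*I₁ + (I₁/κX)^2*κX = I₂ - I₁^2/κX := by
      field_simp
      ring
    rw [heq] at hcrux
    have hI1sq : I₁^2 ≤ κX * I₂ := by
      have h : I₁^2/κX ≤ I₂ := by linarith
      rw [div_le_iff₀ hκX] at h
      linarith [h]
    have hκb : (κX - I₁)^2 ≤ κX * b := by nlinarith [hI1sq]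
    have hb0 : 0 ≤ b := by nlinarith [hκb, sq_nonneg (κX - I₁), hκX]
    -- pointwise bound
    set D : Ω → ℝ := fun ω => ‖Φ (X ω) (Y ω) - Φ (W ω) (Y ω)‖ with hD
    have hDsq : ∀ ω, D ω^2 ≤ 2*κY*(κX - ψ (N ω)) := by
      intro ω
      have hinner : (inner ℝ (Φ (X ω) (Y ω)) (Φ (W ω) (Y ω)) : ℝ)
          = ψ (N ω) * kY (Y ω) (Y ω) := by
        rw [real_inner_comm, hΦ, hW ω, add_sub_cancel_left]
      have h1 : D ω^2 = 2*(kY (Y ω) (Y ω))*(κX - ψ (N ω)) := by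
        rw [hD]
        simp only
        rw [norm_sub_sq_real, ← real_inner_self_eq_norm_sq, ← real_inner_self_eq_norm_sq,
          hinner, hΦ, hΦ]
        simp only [sub_self, hψ0]
        ring
      rw [h1]
      have h2 : 0 ≤ κX - ψ (N ω) := by linarith [hψb (N ω)]
      have h3 : kY (Y ω) (Y ω) ≤ κY := hkYb _ _
      nlinarith [hkYnn (Y ω) (Y ω)]
    have hDint : Integrable D P := (hXY.sub hWY).norm
    have hgint : Integrable (fun ω => 2*κY*(κX - ψ (N ω))) P :=
      ((integrable_const κX).sub hψN).const_mul _
    have hD2int : Integrable (fun ω => D ω^2) P := by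
      refine Integrable.mono' hgint ?_ ?_
      · exact hDint.aestronglyMeasurable.pow 2
      · refine Filter.Eventually.of_forall fun ω => ?_
        rw [Real.norm_eq_abs, abs_of_nonneg (sq_nonneg _)]
        exact hDsq ω
    have hMem : MemLp D 2 P := by
      refine MemLp.of_bound hDint.aestronglyMeasurable (Real.sqrt (2*κY*κX)) ?_
      refine Filter.Eventually.of_forall fun ω => ?_
      rw [Real.norm_eq_abs, abs_of_nonneg (norm_nonneg _)]
      rw [show (‖Φ (X ω) (Y ω) - Φ (W ω) (Y ω)‖ : ℝ) = D ω from rfl]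
      have hDb : D ω ^ 2 ≤ 2*κY*κX := by nlinarith [hDsq ω, hψnn (N ω), hκY0]
      rw [show D ω = Real.sqrt (D ω^2) from (Real.sqrt_sq (norm_nonneg _)).symm]
      exact Real.sqrt_le_sqrt hDb
    have hvar := ProbabilityTheory.variance_nonneg D P
    rw [ProbabilityTheory.variance_eq_sub hMem] at hvar
    simp only [Pi.pow_apply] at hvar
    have hED2 : ∫ ω, D ω^2 ∂P ≤ 2*κY*(κX - I₁) := by
      calc ∫ ω, D ω^2 ∂P ≤ ∫ ω, 2*κY*(κX - ψ (N ω)) ∂P :=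
            integral_mono hD2int hgint hDsq
        _ = 2*κY*(κX - I₁) := by
            rw [integral_const_mul, integral_sub (integrable_const _) hψN]
            simp [hI₁]
    have hLHS : ‖(∫ ω, Φ (X ω) (Y ω) ∂P) - ∫ ω, Φ (W ω) (Y ω) ∂P‖ ≤ ∫ ω, D ω ∂P := by
      rw [← integral_sub hXY hWY]
      exact norm_integral_le_integral_norm _
    have hEDnn : 0 ≤ ∫ ω, D ω ∂P := integral_nonneg fun ω => norm_nonneg _
    have hEDsq : (∫ ω, D ω ∂P)^2 ≤ 2*κY*(κX - I₁) := by linarith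
    have h5 : κX - I₁ ≤ Real.sqrt (κX*b) := by
      rw [show κX - I₁ = Real.sqrt ((κX - I₁)^2) from (Real.sqrt_sq (by linarith)).symm]
      exact Real.sqrt_le_sqrt hκb
    have h6 : (∫ ω, D ω ∂P)^2 ≤ 2*κY*Real.sqrt (κX*b) := by
      refine le_trans hEDsq ?_
      have := mul_le_mul_of_nonneg_left h5 (by linarith : (0:ℝ) ≤ 2*κY)
      linarith
    have h7 : ∫ ω, D ω ∂P ≤ Real.sqrt (2*κY*Real.sqrt (κX*b)) := by
      rw [show ∫ ω, D ω ∂P = Real.sqrt ((∫ ω, D ω ∂P)^2) from (Real.sqrt_sq hEDnn).symm]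
      exact Real.sqrt_le_sqrt h6
    have hRHS : Real.sqrt (2*κY*Real.sqrt (κX*b))
        = Real.sqrt 2 * Real.sqrt κY * Real.sqrt (Real.sqrt κX) * Real.sqrt (Real.sqrt b) := by
      rw [Real.sqrt_mul (by positivity : (0:ℝ) ≤ 2*κY), Real.sqrt_mul (by norm_num : (0:ℝ) ≤ 2),
        Real.sqrt_mul hκX.le, Real.sqrt_mul (Real.sqrt_nonneg κX)]
      ring
    calc ‖(∫ ω, Φ (X ω) (Y ω) ∂P) - ∫ ω, Φ (W ω) (Y ω) ∂P‖
        ≤ ∫ ω, D ω ∂P := hLHS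
      _ ≤ Real.sqrt (2*κY*Real.sqrt (κX*b)) := h7
      _ = _ := hRHS
end
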